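/- Let W be the wheel graph with vertices a, b, c, d, e, x, where a, b, c, d, e form a 5-cycle and x is adjacent to each of a, b, c, d, e (no loops). Then the fundamental group Π₁(W, x), the group of ≡-classes of closed walks at x under concatenation, is cyclic of order 2, generated by the class of the closed walk (x a b x). -/

import Mathlib

/-- A graph: vertex type `V` with a symmetric adjacency relation (loops allowed). -/
structure LGraph (V : Type) where
  Adj : V → V → Prop
  symm : Symmetric Adj

variable {V W X : Type}

/-- `l` is the (nonempty) vertex sequence of a walk in `G`. -/
def IsWalk (G : LGraph V) (l : List V) : Prop :=
  l ≠ [] ∧ l.Chain' G.Adj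

/-- `l` is a walk in `G` from `x` to `y`. -/
def IsWalkFrom (G : LGraph V) (x y : V) (l : List V) : Prop :=
  l.Chain' G.Adj ∧ l.head? = some x ∧ l.getLast? = some y

/-- Concatenation of walks sharing an endpoint: follow `l`, then `m`. -/
def wconcat (l m : List V) : List V := l ++ m.tail

/-- A walk is prunable if some vertex `vᵢ` satisfies `vᵢ = vᵢ₊₂`. -/
def Prunable (l : List V) : Prop :=
  ∃ (p s : List V) (a b : V), l = p ++ a :: b :: a :: s

/-- `m` is obtained from `l` by a single prune (deleting `vᵢ, vᵢ₊₁` when `vᵢ = vᵢ₊₂`). -/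
def PruneOf (l m : List V) : Prop :=
  ∃ (p s : List V) (a b : V), l = p ++ a :: b :: a :: s ∧ m = p ++ a :: s

/-- A single prune step (in either direction) between walks of `G`. -/
def PruneStep (G : LGraph V) (l m : List V) : Prop :=
  IsWalk G l ∧ IsWalk G m ∧ (PruneOf l m ∨ PruneOf m l)

/-- Prune equivalence: the equivalence relation on walks of `G` generated by prunes. -/
def PruneEqv (G : LGraph V) : List V → List V → Prop :=
  Relation.EqvGen (PruneStep G)

/-- A spider move: two walks of `G` of the same length which agree at every index
except (at most) a single interior index. -/
def SpiderStep (G : LGraph V) (l m : List V) : Prop :=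
  IsWalk G l ∧ IsWalk G m ∧ l.length = m.length ∧
    ∃ i : ℕ, 0 < i ∧ i + 1 < l.length ∧ ∀ j : ℕ, j ≠ i → l[j]? = m[j]?

/-- Homotopy rel endpoints (`≡`): the equivalence relation on walks of `G`
generated by prunes and spider moves. -/
def HomEqv (G : LGraph V) : List V → List V → Prop :=
  Relation.EqvGen (fun l m => PruneStep G l m ∨ SpiderStep G l m)

/-- A graph morphism. -/
def IsHom (G : LGraph V) (H : LGraph W) (f : V → W) : Prop :=
  ∀ {u v : V}, G.Adj u v → H.Adj (f u) (f v)

/-- One step of a ×-homotopy between graph morphisms. -/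
def HtpyStep (G : LGraph V) (H : LGraph W) (f g : V → W) : Prop :=
  IsHom G H f ∧ IsHom G H g ∧ ∀ u v, G.Adj u v → H.Adj (f u) (g v)

/-- ×-homotopy of graph morphisms. -/
def Homotopic (G : LGraph V) (H : LGraph W) : (V → W) → (V → W) → Prop :=
  Relation.ReflTransGen (HtpyStep G H)

/-- The wheel graph: vertices `0,…,4` forming a 5-cycle, and a hub `5` adjacent to all
of them; no loops. -/
def Wheel : LGraph (Fin 6) where
  Adj i j :=
    (i = 5 ∧ j ≠ 5) ∨ (j = 5 ∧ i ≠ 5) ∨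
      (i ≠ 5 ∧ j ≠ 5 ∧ (j.val = (i.val + 1) % 5 ∨ i.val = (j.val + 1) % 5))
  symm := by
    intro i j h
    tauto




section Aux

variable {G : LGraph V}

lemma pruneOf_head {l m : List V} (h : PruneOf l m) : l.head? = m.head? := by
  obtain ⟨p, s, a, b, rfl, rfl⟩ := h
  cases p <;> rfl

lemma pruneOf_last {l m : List V} (h : PruneOf l m) : l.getLast? = m.getLast? := by
  obtain ⟨p, s, a, b, rfl, rfl⟩ := h
  rw [List.getLast?_append, List.getLast?_append]
  cases s <;> simp [List.getLast?]

lemma hstep_head {l m : List V} (h : PruneStep G l m ∨ SpiderStep G l m) :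
    l.head? = m.head? := by
  rcases h with ⟨_, _, h | h⟩ | ⟨_, _, hlen, i, h0, h1, hj⟩
  · exact pruneOf_head h
  · exact (pruneOf_head h).symm
  · rw [List.head?_eq_getElem?, List.head?_eq_getElem?]
    exact hj 0 (by omega)

lemma hstep_last {l m : List V} (h : PruneStep G l m ∨ SpiderStep G l m) :
    l.getLast? = m.getLast? := by
  rcases h with ⟨_, _, h | h⟩ | ⟨_, _, hlen, i, h0, h1, hj⟩
  · exact pruneOf_last h
  · exact (pruneOf_last h).symm
  · rw [List.getLast?_eq_getElem?, List.getLast?_eq_getElem?, ← hlen]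
    exact hj _ (by omega)

lemma hstep_parity {l m : List V} (h : PruneStep G l m ∨ SpiderStep G l m) :
    l.length % 2 = m.length % 2 := by
  rcases h with ⟨_, _, h | h⟩ | ⟨_, _, hlen, _⟩
  · obtain ⟨p, s, a, b, rfl, rfl⟩ := h; simp [List.length_append]; omega
  · obtain ⟨p, s, a, b, rfl, rfl⟩ := h; simp [List.length_append]; omega
  · rw [hlen]

lemma homEqv_parity {l m : List V} (h : HomEqv G l m) : l.length % 2 = m.length % 2 := by
  induction h with
  | rel a b hab => exact hstep_parity hab
  | refl a => rfl
  | symm a b h ih => exact ih.symm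
  | trans a b c h1 h2 ih1 ih2 => exact ih1.trans ih2

lemma walk_prepend {γ p : List V} {x : V} (hp : List.Chain' G.Adj (p ++ [x]))
    (hγ : γ.head? = some x) (hw : IsWalk G γ) : IsWalk G (p ++ γ) := by
  obtain ⟨hne, hch⟩ := hw
  refine ⟨by simp [hne], ?_⟩
  refine List.isChain_append.mpr ?_
  obtain ⟨hp1, -, hp2⟩ := List.isChain_append.mp hp
  refine ⟨hp1, hch, fun u hu y hy => ?_⟩
  have hyx : x = y := by
    have := Option.mem_def.mp hy
    rw [hγ] at this
    exact Option.some.inj this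
  exact hyx ▸ hp2 u hu x (by simp)

lemma walk_append {γ s : List V} {x : V} (hs : List.Chain' G.Adj (x :: s))
    (hγ : γ.getLast? = some x) (hw : IsWalk G γ) : IsWalk G (γ ++ s) := by
  obtain ⟨hne, hch⟩ := hw
  refine ⟨by simp [hne], ?_⟩
  refine List.isChain_append.mpr ?_
  obtain ⟨hs1, hs2⟩ := List.isChain_cons.mp hs
  refine ⟨hch, hs2, fun u hu y hy => ?_⟩
  have hux : x = u := by
    have := Option.mem_def.mp hu
    rw [hγ] at this
    exact Option.some.inj this
  exact hux ▸ hs1 y hy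

lemma hstep_congr_left {α β : List V} (p : List V) (x : V)
    (hp : List.Chain' G.Adj (p ++ [x])) (hα : α.head? = some x) (hβ : β.head? = some x)
    (h : PruneStep G α β ∨ SpiderStep G α β) :
    PruneStep G (p ++ α) (p ++ β) ∨ SpiderStep G (p ++ α) (p ++ β) := by
  rcases h with ⟨hw1, hw2, h⟩ | ⟨hw1, hw2, hlen, i, h0, h1, hj⟩
  · refine Or.inl ⟨walk_prepend hp hα hw1, walk_prepend hp hβ hw2, ?_⟩
    rcases h with ⟨q, s, a, b, e1, e2⟩ | ⟨q, s, a, b, e1, e2⟩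
    · exact Or.inl ⟨p ++ q, s, a, b, by rw [e1, List.append_assoc], by rw [e2, List.append_assoc]⟩
    · exact Or.inr ⟨p ++ q, s, a, b, by rw [e1, List.append_assoc], by rw [e2, List.append_assoc]⟩
  · refine Or.inr ⟨walk_prepend hp hα hw1, walk_prepend hp hβ hw2,
      by simp [List.length_append, hlen], p.length + i, by omega,
      by simp only [List.length_append]; omega, fun j hj' => ?_⟩
    by_cases hjp : j < p.length
    · rw [List.getElem?_append, List.getElem?_append, if_pos hjp, if_pos hjp]
    · rw [List.getElem?_append, List.getElem?_append, if_neg hjp, if_neg hjp]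
      exact hj _ (by omega)

lemma hstep_congr_right {α β : List V} (s : List V) (x : V)
    (hs : List.Chain' G.Adj (x :: s)) (hα : α.getLast? = some x) (hβ : β.getLast? = some x)
    (h : PruneStep G α β ∨ SpiderStep G α β) :
    PruneStep G (α ++ s) (β ++ s) ∨ SpiderStep G (α ++ s) (β ++ s) := by
  rcases h with ⟨hw1, hw2, h⟩ | ⟨hw1, hw2, hlen, i, h0, h1, hj⟩
  · refine Or.inl ⟨walk_append hs hα hw1, walk_append hs hβ hw2, ?_⟩
    rcases h with ⟨q, t, a, b, e1, e2⟩ | ⟨q, t, a, b, e1, e2⟩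
    · exact Or.inl ⟨q, t ++ s, a, b, by rw [e1]; simp, by rw [e2]; simp⟩
    · exact Or.inr ⟨q, t ++ s, a, b, by rw [e1]; simp, by rw [e2]; simp⟩
  · refine Or.inr ⟨walk_append hs hα hw1, walk_append hs hβ hw2,
      by simp [List.length_append, hlen], i, h0,
      by simp only [List.length_append]; omega, fun j hj' => ?_⟩
    by_cases hjl : j < α.length
    · rw [List.getElem?_append, List.getElem?_append, if_pos hjl, if_pos (hlen ▸ hjl)]
      exact hj j hj'
    · rw [List.getElem?_append, List.getElem?_append, if_neg hjl,
        if_neg (by rw [← hlen]; exact hjl), hlen]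

lemma homEqv_congr_left {α β : List V} (p : List V) (x : V)
    (hp : List.Chain' G.Adj (p ++ [x])) (h : HomEqv G α β) (hx : α.head? = some x) :
    HomEqv G (p ++ α) (p ++ β) := by
  have key : ∀ {a b : List V}, HomEqv G a b →
      a.head? = b.head? ∧ (a.head? = some x → HomEqv G (p ++ a) (p ++ b)) := by
    intro a b h
    induction h with
    | rel a b hab =>
      exact ⟨hstep_head hab, fun hxa =>
        Relation.EqvGen.rel _ _ (hstep_congr_left p x hp hxa ((hstep_head hab).symm.trans hxa) hab)⟩
    | refl a => exact ⟨rfl, fun _ => Relation.EqvGen.refl _⟩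
    | symm a b h ih =>
      exact ⟨ih.1.symm, fun hxb => Relation.EqvGen.symm _ _ (ih.2 (ih.1.trans hxb))⟩
    | trans a b c h1 h2 ih1 ih2 =>
      exact ⟨ih1.1.trans ih2.1, fun hxa =>
        Relation.EqvGen.trans _ _ _ (ih1.2 hxa) (ih2.2 (ih1.1.symm.trans hxa))⟩
  exact (key h).2 hx

lemma homEqv_congr_right {α β : List V} (s : List V) (x : V)
    (hs : List.Chain' G.Adj (x :: s)) (h : HomEqv G α β) (hx : α.getLast? = some x) :
    HomEqv G (α ++ s) (β ++ s) := by
  have key : ∀ {a b : List V}, HomEqv G a b →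
      a.getLast? = b.getLast? ∧ (a.getLast? = some x → HomEqv G (a ++ s) (b ++ s)) := by
    intro a b h
    induction h with
    | rel a b hab =>
      exact ⟨hstep_last hab, fun hxa =>
        Relation.EqvGen.rel _ _ (hstep_congr_right s x hs hxa ((hstep_last hab).symm.trans hxa) hab)⟩
    | refl a => exact ⟨rfl, fun _ => Relation.EqvGen.refl _⟩
    | symm a b h ih =>
      exact ⟨ih.1.symm, fun hxb => Relation.EqvGen.symm _ _ (ih.2 (ih.1.trans hxb))⟩
    | trans a b c h1 h2 ih1 ih2 =>
      exact ⟨ih1.1.trans ih2.1, fun hxa =>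
        Relation.EqvGen.trans _ _ _ (ih1.2 hxa) (ih2.2 (ih1.1.symm.trans hxa))⟩
  exact (key h).2 hx

lemma htrans {a b c : List V} (h1 : HomEqv G a b) (h2 : HomEqv G b c) : HomEqv G a c :=
  Relation.EqvGen.trans _ _ _ h1 h2

end Aux

instance : DecidableRel Wheel.Adj := fun i j =>
  inferInstanceAs (Decidable ((i = 5 ∧ j ≠ 5) ∨ (j = 5 ∧ i ≠ 5) ∨
      (i ≠ 5 ∧ j ≠ 5 ∧ (j.val = (i.val + 1) % 5 ∨ i.val = (j.val + 1) % 5))))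

lemma wadj5 : ∀ u : Fin 6, u ≠ 5 → Wheel.Adj 5 u := by decide
lemma wadj5' : ∀ u : Fin 6, u ≠ 5 → Wheel.Adj u 5 := by decide
lemma wadj_ne : ∀ v : Fin 6, Wheel.Adj 5 v → v ≠ 5 := by decide
lemma wadj_ne' : ∀ u : Fin 6, Wheel.Adj u 5 → u ≠ 5 := by decide

instance decChainWheel : ∀ (l : List (Fin 6)), Decidable (List.Chain' Wheel.Adj l)
  | [] => isTrue List.isChain_nil
  | [_] => isTrue (List.isChain_singleton _)
  | _ :: b :: l =>
      haveI := decChainWheel (b :: l)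
      decidable_of_iff _ List.isChain_cons_cons.symm

instance (l : List (Fin 6)) : Decidable (IsWalk Wheel l) :=
  inferInstanceAs (Decidable (l ≠ [] ∧ l.Chain' Wheel.Adj))

lemma spw (l m : List (Fin 6)) (i : ℕ)
    (h1 : IsWalk Wheel l := by decide) (h2 : IsWalk Wheel m := by decide)
    (h3 : l.length = m.length := by decide)
    (h4 : 0 < i := by decide) (h5 : i + 1 < l.length := by decide)
    (h6 : ∀ j < l.length, j ≠ i → l[j]? = m[j]? := by decide) :
    HomEqv Wheel l m :=
  Relation.EqvGen.rel _ _ (Or.inr ⟨h1, h2, h3, i, h4, h5, fun j hj =>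
    if h : j < l.length then h6 j h hj
    else by
      rw [List.getElem?_eq_none (Nat.le_of_not_lt h),
        List.getElem?_eq_none (h3 ▸ Nat.le_of_not_lt h)]⟩)

lemma prw (p s : List (Fin 6)) (a b : Fin 6)
    (h1 : IsWalk Wheel (p ++ a :: b :: a :: s) := by decide)
    (h2 : IsWalk Wheel (p ++ a :: s) := by decide) :
    HomEqv Wheel (p ++ a :: b :: a :: s) (p ++ a :: s) :=
  Relation.EqvGen.rel _ _ (Or.inl ⟨h1, h2, Or.inl ⟨p, s, a, b, rfl, rfl⟩⟩)

lemma square_eqv : HomEqv Wheel [5, 0, 1, 5, 0, 1, 5] [(5 : Fin 6)] :=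
  htrans (spw [5,0,1,5,0,1,5] [5,0,4,5,0,1,5] 2) <|
  htrans (spw [5,0,4,5,0,1,5] [5,0,4,5,2,1,5] 4) <|
  htrans (spw [5,0,4,5,2,1,5] [5,0,4,3,2,1,5] 3) <|
  htrans (spw [5,0,4,3,2,1,5] [5,0,5,3,2,1,5] 2) <|
  htrans (prw [] [3,2,1,5] 5 0) <|
  htrans (spw [5,3,2,1,5] [5,3,5,1,5] 2) <|
  htrans (prw [] [1,5] 5 3) <|
  prw [] [] 5 1

lemma loop_eqv : ∀ a b : Fin 6, Wheel.Adj a b → a ≠ 5 → b ≠ 5 →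
    HomEqv Wheel [5, a, b, 5] [5, 0, 1, 5] := by
  have e01 : HomEqv Wheel [5,0,1,5] [5,0,1,5] := Relation.EqvGen.refl _
  have e21 := spw [5,2,1,5] [5,0,1,5] 1
  have e04 := spw [5,0,4,5] [5,0,1,5] 2
  have e23 := htrans (spw [5,2,3,5] [5,2,1,5] 2) e21
  have e34 := htrans (spw [5,3,4,5] [5,0,4,5] 1) e04
  have e43 := htrans (spw [5,4,3,5] [5,2,3,5] 1) e23
  have e40 := htrans (spw [5,4,0,5] [5,4,3,5] 2) e43
  have e10 := htrans (spw [5,1,0,5] [5,4,0,5] 1) e40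
  have e12 := htrans (spw [5,1,2,5] [5,1,0,5] 2) e10
  have e32 := htrans (spw [5,3,2,5] [5,1,2,5] 1) e12
  intro a b hab ha hb
  fin_cases a <;> fin_cases b <;>
    first
      | exact absurd hab (by decide)
      | exact absurd rfl ha
      | exact absurd rfl hb
      | exact e01 | exact e21 | exact e04 | exact e23 | exact e34
      | exact e43 | exact e40 | exact e10 | exact e12 | exact e32

lemma main_reduction : ∀ (n : ℕ) (α : List (Fin 6)), α.length ≤ n →
    IsWalkFrom Wheel 5 5 α →
    HomEqv Wheel α [(5 : Fin 6)] ∨ HomEqv Wheel α [5, 0, 1, 5] := by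
  intro n
  induction n with
  | zero =>
    rintro α hlen ⟨-, hh, -⟩
    cases α with
    | nil => simp at hh
    | cons a r => simp at hlen
  | succ n ih =>
    rintro α hlen ⟨hch, hh, hl⟩
    obtain ⟨a, rest, rfl⟩ : ∃ a r, α = a :: r := by
      cases α with
      | nil => simp at hh
      | cons a r => exact ⟨a, r, rfl⟩
    have ha : a = 5 := by simpa using hh
    subst ha
    cases rest with
    | nil => exact Or.inl (Relation.EqvGen.refl _)
    | cons v rest2 =>
      obtain ⟨a1, hch⟩ := List.isChain_cons_cons.mp hch
      have hv : v ≠ 5 := wadj_ne v a1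
      cases rest2 with
      | nil =>
        have : v = (5 : Fin 6) := by simpa using hl
        exact absurd this hv
      | cons w rest3 =>
        obtain ⟨a2, hch⟩ := List.isChain_cons_cons.mp hch
        cases rest3 with
        | nil =>
          have hw : w = (5 : Fin 6) := by simpa using hl
          subst hw
          refine Or.inl (Relation.EqvGen.rel _ _ (Or.inl ⟨⟨by simp, ?_⟩,
            ⟨by simp, List.isChain_singleton _⟩, Or.inl ⟨[], [], 5, v, rfl, rfl⟩⟩))
          exact List.isChain_cons_cons.mpr ⟨a1, List.isChain_cons_cons.mpr ⟨a2, List.isChain_singleton _⟩⟩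
        | cons u rest =>
          obtain ⟨a3, hch⟩ := List.isChain_cons_cons.mp hch
          have hlast : (u :: rest).getLast? = some 5 := by
            rw [List.getLast?_cons_cons, List.getLast?_cons_cons, List.getLast?_cons_cons] at hl
            exact hl
          have hchfull : List.Chain' Wheel.Adj (5 :: v :: w :: u :: rest) :=
            List.isChain_cons_cons.mpr ⟨a1, List.isChain_cons_cons.mpr ⟨a2, List.isChain_cons_cons.mpr ⟨a3, hch⟩⟩⟩
          by_cases hu : u = 5
          · subst hu
            have hw : w ≠ 5 := wadj_ne' w a3
            have hrec := ih (5 :: rest) (by simp at hlen ⊢; omega) ⟨hch, rfl, hlast⟩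
            have hpch : List.Chain' Wheel.Adj ([5, v, w] ++ [(5 : Fin 6)]) :=
              List.isChain_cons_cons.mpr ⟨a1, List.isChain_cons_cons.mpr ⟨a2,
                List.isChain_cons_cons.mpr ⟨a3, List.isChain_singleton _⟩⟩⟩
            rcases hrec with ht | ht
            · have hcong : HomEqv Wheel ([5, v, w] ++ (5 :: rest)) ([5, v, w] ++ [(5 : Fin 6)]) :=
                homEqv_congr_left [5, v, w] 5 hpch ht rfl
              exact Or.inr (htrans hcong (loop_eqv v w a2 hv hw))
            · have hcong : HomEqv Wheel ([5, v, w] ++ (5 :: rest)) ([5, v, w] ++ [5, 0, 1, 5]) :=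
                homEqv_congr_left [5, v, w] 5 hpch ht rfl
              have hsuf : HomEqv Wheel ([5, v, w, 5] ++ [0, 1, 5]) ([5, 0, 1, 5] ++ [0, 1, 5]) :=
                homEqv_congr_right [0, 1, 5] 5 (by decide) (loop_eqv v w a2 hv hw) rfl
              exact Or.inl (htrans hcong (htrans hsuf square_eqv))
          · have hm : IsWalk Wheel (5 :: v :: 5 :: u :: rest) :=
              ⟨by simp, List.isChain_cons_cons.mpr ⟨a1, List.isChain_cons_cons.mpr ⟨wadj5' v hv,
                List.isChain_cons_cons.mpr ⟨wadj5 u hu, hch⟩⟩⟩⟩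
            have hspider : HomEqv Wheel (5 :: v :: w :: u :: rest) (5 :: v :: 5 :: u :: rest) :=
              Relation.EqvGen.rel _ _ (Or.inr ⟨⟨by simp, hchfull⟩, hm, by simp, 2,
                by omega, by simp, fun j hj => by
                  match j with
                  | 0 => rfl
                  | 1 => rfl
                  | 2 => exact absurd rfl hj
                  | (k+3) => rfl⟩)
            have hprune : HomEqv Wheel (5 :: v :: 5 :: u :: rest) (5 :: u :: rest) :=
              Relation.EqvGen.rel _ _ (Or.inl ⟨hm,
                ⟨by simp, List.isChain_cons_cons.mpr ⟨wadj5 u hu, hch⟩⟩,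
                Or.inl ⟨[], u :: rest, 5, v, rfl, rfl⟩⟩)
            have hrec := ih (5 :: u :: rest) (by simp at hlen ⊢; omega)
              ⟨List.isChain_cons_cons.mpr ⟨wadj5 u hu, hch⟩, rfl, by
                rw [List.getLast?_cons_cons]; exact hlast⟩
            rcases hrec with ht | ht
            · exact Or.inl (htrans hspider (htrans hprune ht))
            · exact Or.inr (htrans hspider (htrans hprune ht))

/-- the fundamental group of the wheel at the hub `x = 5` is cyclic of
order 2, generated by the class of the closed walk `(x a b x) = (5 0 1 5)`: this class
is nontrivial, squares to the identity, and every closed walk at the hub is `≡` to the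
trivial walk or to `(5 0 1 5)`. -/
theorem stmt19 :
    ¬ HomEqv Wheel [5, 0, 1, 5] [(5 : Fin 6)] ∧
    HomEqv Wheel (wconcat [5, 0, 1, 5] [5, 0, 1, 5]) [(5 : Fin 6)] ∧
    (∀ α : List (Fin 6), IsWalkFrom Wheel 5 5 α →
      (HomEqv Wheel α [(5 : Fin 6)] ∨ HomEqv Wheel α [5, 0, 1, 5])) := by
  refine ⟨fun h => ?_, square_eqv, fun α hα => main_reduction α.length α le_rfl hα⟩
  simpa using homEqv_parity h
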